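/- arXiv:2110.07037 — 4 statements merged into one kernel-verified Lean document; each statement's English description precedes it below -/
import Mathlib

section
/- Failure of the vanilla PINN loss for small Knudsen number: let ε > 0 and let E_v(f) = ∫₀¹∫_{−1}^{1} (ε v ∂_x f − ⟨f⟩ + f + ε v)² dv dx + ∫₀¹ (f(0,v) − 1)² dv + ∫_{−1}^{0} f(1,v)² dv be the vanilla PINN loss of the toy problem, whose exact solution is f*(x,v) = 1 − x. Then for every h ∈ C¹([0,1]) with h(0) = 1 and h(1) = 0, the v-independent function f(x,v) = h(x) satisfies E_v(f) = (2/3) ε² ∫₀¹ (h′(x) + 1)² dx, while ∫₀¹∫_{−1}^{1} (f − f*)² dv dx = 2 ∫₀¹ (h(x) − (1 − x))² dx. In particular, for h(x) = (1−x)² one gets E_v(f) = 2ε²/9 while the squared L² error equals 1/15, so the vanilla loss can be O(ε²) while the L² error remains O(1). -/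
open MeasureTheory Set

/-- Velocity average `⟨h⟩(x) = (1/2)∫_{-1}^{1} h(x,v) dv`. -/
noncomputable def vavg (h : ℝ → ℝ → ℝ) (x : ℝ) : ℝ := (1/2) * ∫ v in (-1:ℝ)..1, h x v

/-- The vanilla PINN loss of the toy problem
`ε v ∂_x f = ⟨f⟩ − f − ε v`, `f(0,v)=1` for `v ∈ (0,1]`, `f(1,v)=0` for `v ∈ [−1,0)`. -/
noncomputable def vanillaLoss (ε : ℝ) (f : ℝ → ℝ → ℝ) : ℝ :=
  (∫ x in (0:ℝ)..1, ∫ v in (-1:ℝ)..1,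
    (ε * v * deriv (fun y => f y v) x - vavg f x + f x v + ε * v) ^ 2)
  + (∫ v in (0:ℝ)..1, (f 0 v - 1) ^ 2)
  + (∫ v in (-1:ℝ)..0, (f 1 v) ^ 2)


lemma inner_int (c : ℝ) : (∫ v in (-1:ℝ)..1, (c*v)^2) = 2/3 * c^2 := by
  simp [mul_pow, intervalIntegral.integral_const_mul, integral_pow]
  ring

lemma loss_eq (ε : ℝ) (h : ℝ → ℝ) (h0 : h 0 = 1) (h1 : h 1 = 0) :
    vanillaLoss ε (fun x _ => h x)
      = (2/3) * ε ^ 2 * ∫ x in (0:ℝ)..1, (deriv h x + 1) ^ 2 := by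
  unfold vanillaLoss vavg
  have key : ∀ x : ℝ,
      (∫ v in (-1:ℝ)..1,
        (ε * v * deriv (fun y => (fun x _ => h x) y v) x
          - (1/2) * (∫ v in (-1:ℝ)..1, (fun x _ => h x) x v)
          + (fun x _ => h x) x v + ε * v) ^ 2)
        = (2/3 * ε^2) * (deriv h x + 1)^2 := by
    intro x
    have havg : (1/2 : ℝ) * (∫ _ in (-1:ℝ)..1, h x) = h x := by
      rw [intervalIntegral.integral_const]; simp; ring
    simp only []
    rw [havg]
    have hfun : (fun v : ℝ => (ε * v * deriv (fun y => h y) x - h x + h x + ε * v) ^ 2)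
        = fun v : ℝ => ((ε * (deriv h x + 1)) * v) ^ 2 := by
      funext v; ring
    rw [hfun, inner_int]
    ring
  simp only [key, h0, h1]
  rw [intervalIntegral.integral_const_mul]
  simp

lemma l2_eq (g : ℝ → ℝ) :
    (∫ x in (0:ℝ)..1, ∫ v in (-1:ℝ)..1, (g x) ^ 2) = 2 * ∫ x in (0:ℝ)..1, (g x) ^ 2 := by
  have key : ∀ x : ℝ, (∫ _ in (-1:ℝ)..1, (g x) ^ 2) = 2 * (g x) ^ 2 := by
    intro x; rw [intervalIntegral.integral_const]; norm_num
  simp only [key]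
  rw [intervalIntegral.integral_const_mul]

lemma hd2 : ∀ x : ℝ, deriv (fun y : ℝ => (1 - y) ^ 2) x = 2 * x - 2 := by
  intro x
  have h : HasDerivAt (fun y : ℝ => (1 - y) ^ 2) (2 * x - 2) x := by
    have := (((hasDerivAt_id' (𝕜 := ℝ)) x).const_sub 1).fun_pow 2
    refine this.congr_deriv ?_
    push_cast; ring
  exact h.deriv

lemma poly_int1 : (∫ x in (0:ℝ)..1, (2 * x - 2 + 1) ^ 2) = 1/3 := by
  have hd : ∀ x ∈ uIcc (0:ℝ) 1, HasDerivAt (fun x : ℝ => (2*x-1)^3/6) ((2*x-2+1)^2) x := by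
    intro x _
    have := (((((hasDerivAt_id' (𝕜 := ℝ)) x).const_mul 2).sub_const 1).fun_pow 3).div_const 6
    refine this.congr_deriv ?_
    push_cast; ring
  rw [intervalIntegral.integral_eq_sub_of_hasDerivAt hd
    ((Continuous.intervalIntegrable (by continuity) _ _))]
  norm_num

lemma poly_int2 : (∫ x in (0:ℝ)..1, ((1 - x) ^ 2 - (1 - x)) ^ 2) = 1/30 := by
  have hd : ∀ x ∈ uIcc (0:ℝ) 1,
      HasDerivAt (fun x : ℝ => x^5/5 - x^4/2 + x^3/3) (((1 - x) ^ 2 - (1 - x)) ^ 2) x := by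
    intro x _
    have := (((hasDerivAt_pow 5 x).div_const 5).sub ((hasDerivAt_pow 4 x).div_const 2)).add
      ((hasDerivAt_pow 3 x).div_const 3)
    refine this.congr_deriv ?_
    push_cast; ring
  rw [intervalIntegral.integral_eq_sub_of_hasDerivAt hd
    ((Continuous.intervalIntegrable (by continuity) _ _))]
  norm_num

/-- Failure of the vanilla PINN loss for small Knudsen number: any `v`-independent
`f(x,v) = h(x)` with `h ∈ C¹([0,1])`, `h(0)=1`, `h(1)=0` has vanilla loss
`(2/3) ε² ∫₀¹ (h′+1)²` while its squared `L²` distance to the exact solution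
`f*(x,v) = 1 − x` equals `2 ∫₀¹ (h(x) − (1−x))²`.  In particular for `h(x) = (1−x)²`
the loss is `2ε²/9` while the squared `L²` error is `1/15`. -/
theorem vanilla_pinn_failure (ε : ℝ) (hε : 0 < ε) :
    (∀ h : ℝ → ℝ, ContDiffOn ℝ 1 h (Icc 0 1) → h 0 = 1 → h 1 = 0 →
      (vanillaLoss ε (fun x _ => h x)
          = (2/3) * ε ^ 2 * ∫ x in (0:ℝ)..1, (deriv h x + 1) ^ 2) ∧
      ((∫ x in (0:ℝ)..1, ∫ v in (-1:ℝ)..1, (h x - (1 - x)) ^ 2)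
          = 2 * ∫ x in (0:ℝ)..1, (h x - (1 - x)) ^ 2)) ∧
    (vanillaLoss ε (fun x _ => (1 - x) ^ 2) = 2 * ε ^ 2 / 9) ∧
    ((∫ x in (0:ℝ)..1, ∫ v in (-1:ℝ)..1, ((1 - x) ^ 2 - (1 - x)) ^ 2) = 1 / 15) := by
  refine ⟨fun h _ h0 h1 => ⟨loss_eq ε h h0 h1, l2_eq (fun x => h x - (1 - x))⟩, ?_, ?_⟩
  · rw [loss_eq ε (fun x => (1 - x) ^ 2) (by norm_num) (by norm_num)]
    simp only [hd2]
    rw [poly_int1]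
    ring
  · rw [l2_eq (fun x => (1 - x) ^ 2 - (1 - x)), poly_int2]
    norm_num
end

section
/- Uniqueness for the macro–micro system (1D, isotropic scattering): assume σ_min ≤ σ_s(x) ≤ σ_max and 0 ≤ σ_a(x) ≤ σ_max on [0,1] with 0 < σ_min ≤ σ_max, and let ε ∈ (0,1]. If (ρ₁, g₁) and (ρ₂, g₂), both in C¹([0,1]) × C¹(Ω) with ⟨g₁⟩ ≡ 0 and ⟨g₂⟩ ≡ 0, solve the macro–micro system with the same data σ_s, σ_a, G, φ, then ρ₁ = ρ₂ and g₁ = g₂. -/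
open MeasureTheory Set Function

/-- `f ∈ C¹(Ω)` with `Ω = [0,1] × [−1,1]`. -/
def C1Omega (f : ℝ → ℝ → ℝ) : Prop :=
  ContDiffOn ℝ 1 (uncurry f) (Icc (0:ℝ) 1 ×ˢ Icc (-1:ℝ) 1)

/-- `f` solves the 1D RTE `ε v ∂_x f = σ_s(⟨f⟩ − f) − ε² σ_a f + ε² G` on
`Ω = [0,1] × [−1,1]` with inflow boundary data `φ`. -/
def SolvesRTE (ε : ℝ) (σs σa G : ℝ → ℝ) (φ f : ℝ → ℝ → ℝ) : Prop :=
  (∀ x ∈ Icc (0:ℝ) 1, ∀ v ∈ Icc (-1:ℝ) 1,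
    ε * v * deriv (fun y => f y v) x
      = σs x * (vavg f x - f x v) - ε ^ 2 * σa x * f x v + ε ^ 2 * G x) ∧
  (∀ v ∈ Ioc (0:ℝ) 1, f 0 v = φ 0 v) ∧
  (∀ v ∈ Ico (-1:ℝ) 0, f 1 v = φ 1 v)

/-- The pair `(ρ, g)` solves the macro–micro system:
`⟨v ∂_x g⟩ = −σ_a ρ + G` on `[0,1]`;
`v ∂_x(ρ + ε g) − ε⟨v ∂_x g⟩ = σ_s(⟨g⟩ − g) − ε² σ_a g` on `Ω`;
`ρ(0) + ε g(0,v) = φ(0,v)` for `v ∈ (0,1]` and `ρ(1) + ε g(1,v) = φ(1,v)` for `v ∈ [−1,0)`. -/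
def SolvesMM (ε : ℝ) (σs σa G : ℝ → ℝ) (φ : ℝ → ℝ → ℝ)
    (ρ : ℝ → ℝ) (g : ℝ → ℝ → ℝ) : Prop :=
  (∀ x ∈ Icc (0:ℝ) 1,
    ((1/2) * ∫ v in (-1:ℝ)..1, v * deriv (fun y => g y v) x) = -(σa x) * ρ x + G x) ∧
  (∀ x ∈ Icc (0:ℝ) 1, ∀ v ∈ Icc (-1:ℝ) 1,
    v * deriv (fun y => ρ y + ε * g y v) x
      - ε * ((1/2) * ∫ w in (-1:ℝ)..1, w * deriv (fun y => g y w) x)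
      = σs x * (vavg g x - g x v) - ε ^ 2 * σa x * g x v) ∧
  (∀ v ∈ Ioc (0:ℝ) 1, ρ 0 + ε * g 0 v = φ 0 v) ∧
  (∀ v ∈ Ico (-1:ℝ) 0, ρ 1 + ε * g 1 v = φ 1 v)

section Aux

lemma sliceX_contOn {g : ℝ → ℝ → ℝ} (hg : C1Omega g) {v : ℝ} (hv : v ∈ Icc (-1:ℝ) 1) :
    ContinuousOn (fun y => g y v) (Icc (0:ℝ) 1) :=
  hg.continuousOn.comp ((continuous_id.prodMk continuous_const).continuousOn)
    (fun _ hy => ⟨hy, hv⟩)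

lemma sliceV_contOn {g : ℝ → ℝ → ℝ} (hg : C1Omega g) {x : ℝ} (hx : x ∈ Icc (0:ℝ) 1) :
    ContinuousOn (fun v => g x v) (Icc (-1:ℝ) 1) :=
  hg.continuousOn.comp ((continuous_const.prodMk continuous_id).continuousOn)
    (fun _ hv => ⟨hx, hv⟩)

lemma sliceX_diffAt {g : ℝ → ℝ → ℝ} (hg : C1Omega g) {x v : ℝ}
    (hx : x ∈ Ioo (0:ℝ) 1) (hv : v ∈ Icc (-1:ℝ) 1) :
    DifferentiableAt ℝ (fun y => g y v) x := by
  have h1 : DifferentiableWithinAt ℝ (uncurry g) (Icc (0:ℝ) 1 ×ˢ Icc (-1:ℝ) 1) (x, v) :=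
    (hg.differentiableOn one_ne_zero) (x, v) ⟨Ioo_subset_Icc_self hx, hv⟩
  have h2 : DifferentiableWithinAt ℝ (fun y : ℝ => g y v) (Icc (0:ℝ) 1) x :=
    DifferentiableWithinAt.comp (g := uncurry g) (f := fun y : ℝ => (y, v)) x h1 (differentiableWithinAt_id.prodMk (differentiableWithinAt_const v))
      (fun (y : ℝ) (hy : y ∈ Icc (0:ℝ) 1) => (⟨hy, hv⟩ : (y, v) ∈ Icc (0:ℝ) 1 ×ˢ Icc (-1:ℝ) 1))
  exact h2.differentiableAt (Icc_mem_nhds hx.1 hx.2)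

lemma bound_of_C1 {g : ℝ → ℝ → ℝ} (hg : C1Omega g) :
    ∃ M : ℝ, 0 ≤ M ∧ ∀ x ∈ Icc (0:ℝ) 1, ∀ v ∈ Icc (-1:ℝ) 1, |g x v| ≤ M := by
  obtain ⟨M, hM⟩ := (isCompact_Icc.prod isCompact_Icc).exists_bound_of_continuousOn
    hg.continuousOn
  refine ⟨max M 0, le_max_right _ _, fun x hx v hv => ?_⟩
  have := hM (x, v) ⟨hx, hv⟩
  rw [Real.norm_eq_abs] at this
  exact this.trans (le_max_left _ _)

lemma bound1_of_cont {ρ : ℝ → ℝ} (hρ : ContinuousOn ρ (Icc (0:ℝ) 1)) :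
    ∃ M : ℝ, 0 ≤ M ∧ ∀ x ∈ Icc (0:ℝ) 1, |ρ x| ≤ M := by
  obtain ⟨M, hM⟩ := isCompact_Icc.exists_bound_of_continuousOn hρ
  refine ⟨max M 0, le_max_right _ _, fun x hx => ?_⟩
  have := hM x hx
  rw [Real.norm_eq_abs] at this
  exact this.trans (le_max_left _ _)

lemma arith_Q {A B r Q : ℝ} (hA : 0 < A) (hB : 0 ≤ B)
    (h2 : A * (2 * r^2 - Q) - B * Q = 0) (h3 : 2 * r^2 ≤ Q) (h4 : 0 ≤ Q) :
    Q = 2 * r^2 := by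
  nlinarith [mul_nonneg hB h4, mul_nonneg hA.le (sub_nonneg.mpr h3)]

end Aux

/-- Uniqueness for the macro–micro system (1D, isotropic scattering): under the bounds
`0 < σ_min ≤ σ_s ≤ σ_max` and `0 ≤ σ_a ≤ σ_max` on `[0,1]` and for `ε ∈ (0,1]`, two `C¹`
solutions of the macro–micro system with mean-zero micro parts and the same data
coincide on `[0,1]` and on `Ω = [0,1] × [−1,1]` respectively. -/
theorem macro_micro_uniqueness (σmin σmax : ℝ) (hσmin : 0 < σmin) (hσ : σmin ≤ σmax)
    (σs σa G : ℝ → ℝ) (φ : ℝ → ℝ → ℝ)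
    (hσs : ∀ x ∈ Icc (0:ℝ) 1, σmin ≤ σs x ∧ σs x ≤ σmax)
    (hσa : ∀ x ∈ Icc (0:ℝ) 1, 0 ≤ σa x ∧ σa x ≤ σmax)
    (ε : ℝ) (hε : ε ∈ Ioc (0:ℝ) 1)
    (ρ₁ ρ₂ : ℝ → ℝ) (g₁ g₂ : ℝ → ℝ → ℝ)
    (hρ₁ : ContDiffOn ℝ 1 ρ₁ (Icc 0 1)) (hg₁ : C1Omega g₁)
    (hρ₂ : ContDiffOn ℝ 1 ρ₂ (Icc 0 1)) (hg₂ : C1Omega g₂)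
    (hm₁ : ∀ x ∈ Icc (0:ℝ) 1, vavg g₁ x = 0)
    (hm₂ : ∀ x ∈ Icc (0:ℝ) 1, vavg g₂ x = 0)
    (hs₁ : SolvesMM ε σs σa G φ ρ₁ g₁)
    (hs₂ : SolvesMM ε σs σa G φ ρ₂ g₂) :
    (∀ x ∈ Icc (0:ℝ) 1, ρ₁ x = ρ₂ x) ∧
    (∀ x ∈ Icc (0:ℝ) 1, ∀ v ∈ Icc (-1:ℝ) 1, g₁ x v = g₂ x v) := by
  obtain ⟨hε0, hε1⟩ := hε
  obtain ⟨hA₁, hB₁, hb0₁, hb1₁⟩ := hs₁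
  obtain ⟨hA₂, hB₂, hb0₂, hb1₂⟩ := hs₂
  -- the difference functions
  set ρ : ℝ → ℝ := fun x => ρ₁ x - ρ₂ x with hρdef
  set f : ℝ → ℝ → ℝ := fun x v => ρ x + ε * (g₁ x v - g₂ x v) with hfdef
  have hεne : ε ≠ 0 := ne_of_gt hε0
  -- continuity of slices of f
  have hρcont : ContinuousOn ρ (Icc (0:ℝ) 1) := (hρ₁.sub hρ₂).continuousOn
  have hfx_cont : ∀ v ∈ Icc (-1:ℝ) 1, ContinuousOn (fun y => f y v) (Icc (0:ℝ) 1) := by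
    intro v hv
    exact hρcont.add (continuousOn_const.mul ((sliceX_contOn hg₁ hv).sub (sliceX_contOn hg₂ hv)))
  have hfv_cont : ∀ x ∈ Icc (0:ℝ) 1, ContinuousOn (fun v => f x v) (Icc (-1:ℝ) 1) := by
    intro x hx
    exact continuousOn_const.add
      (continuousOn_const.mul ((sliceV_contOn hg₁ hx).sub (sliceV_contOn hg₂ hx)))
  -- bounds
  obtain ⟨Mρ, hMρ0, hMρ⟩ := bound1_of_cont hρcont
  obtain ⟨Mg₁, hMg₁0, hMg₁⟩ := bound_of_C1 hg₁
  obtain ⟨Mg₂, hMg₂0, hMg₂⟩ := bound_of_C1 hg₂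
  set M : ℝ := Mρ + Mg₁ + Mg₂ with hMdef
  have hM0 : 0 ≤ M := by positivity
  have hfM : ∀ x ∈ Icc (0:ℝ) 1, ∀ v ∈ Icc (-1:ℝ) 1, |f x v| ≤ M := by
    intro x hx v hv
    have h1 := hMρ x hx
    have h2 := hMg₁ x hx v hv
    have h3 := hMg₂ x hx v hv
    have : |f x v| ≤ |ρ x| + ε * (|g₁ x v| + |g₂ x v|) := by
      rw [hfdef]
      calc |ρ x + ε * (g₁ x v - g₂ x v)| ≤ |ρ x| + |ε * (g₁ x v - g₂ x v)| := abs_add_le _ _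
        _ = |ρ x| + ε * |g₁ x v - g₂ x v| := by
            rw [abs_mul, abs_of_pos hε0]
        _ ≤ |ρ x| + ε * (|g₁ x v| + |g₂ x v|) := by
            have := abs_sub (g₁ x v) (g₂ x v)
            nlinarith
    nlinarith [abs_nonneg (g₁ x v), abs_nonneg (g₂ x v)]
  -- integrability of slices in v
  have hfint : ∀ x ∈ Icc (0:ℝ) 1, IntervalIntegrable (fun v => f x v) volume (-1) 1 := by
    intro x hx
    apply ContinuousOn.intervalIntegrable
    rw [uIcc_of_le (by norm_num : (-1:ℝ) ≤ 1)]
    exact hfv_cont x hx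
  have hf2int : ∀ x ∈ Icc (0:ℝ) 1, IntervalIntegrable (fun v => (f x v)^2) volume (-1) 1 := by
    intro x hx
    apply ContinuousOn.intervalIntegrable
    rw [uIcc_of_le (by norm_num : (-1:ℝ) ≤ 1)]
    exact (hfv_cont x hx).pow 2
  -- the mean of f is ρ
  have hmean : ∀ x ∈ Icc (0:ℝ) 1, (∫ v in (-1:ℝ)..1, f x v) = 2 * ρ x := by
    intro x hx
    have i1 : IntervalIntegrable (fun v => g₁ x v) volume (-1) 1 := by
      apply ContinuousOn.intervalIntegrable
      rw [uIcc_of_le (by norm_num : (-1:ℝ) ≤ 1)]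
      exact sliceV_contOn hg₁ hx
    have i2 : IntervalIntegrable (fun v => g₂ x v) volume (-1) 1 := by
      apply ContinuousOn.intervalIntegrable
      rw [uIcc_of_le (by norm_num : (-1:ℝ) ≤ 1)]
      exact sliceV_contOn hg₂ hx
    have e1 : (∫ v in (-1:ℝ)..1, g₁ x v) = 0 := by
      have := hm₁ x hx; unfold vavg at this; linarith
    have e2 : (∫ v in (-1:ℝ)..1, g₂ x v) = 0 := by
      have := hm₂ x hx; unfold vavg at this; linarith
    have : (∫ v in (-1:ℝ)..1, f x v)
        = ∫ v in (-1:ℝ)..1, (ρ x + ε * (g₁ x v - g₂ x v)) := rfl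
    rw [this, intervalIntegral.integral_add intervalIntegrable_const ((i1.sub i2).const_mul ε),
      intervalIntegral.integral_const_mul, intervalIntegral.integral_sub i1 i2, e1, e2,
      intervalIntegral.integral_const]
    norm_num
  -- key pointwise identity on the interior
  have hfd : ∀ x ∈ Ioo (0:ℝ) 1, ∀ v ∈ Icc (-1:ℝ) 1, ∃ d : ℝ,
      HasDerivAt (fun y => f y v) d x ∧
      ε * v * d = σs x * (ρ x - f x v) - ε ^ 2 * σa x * f x v := by
    intro x hx v hv
    have hxS : x ∈ Icc (0:ℝ) 1 := Ioo_subset_Icc_self hx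
    have hdρ₁ : DifferentiableAt ℝ ρ₁ x :=
      ((hρ₁.differentiableOn one_ne_zero) x hxS).differentiableAt (Icc_mem_nhds hx.1 hx.2)
    have hdρ₂ : DifferentiableAt ℝ ρ₂ x :=
      ((hρ₂.differentiableOn one_ne_zero) x hxS).differentiableAt (Icc_mem_nhds hx.1 hx.2)
    have hdg₁ : DifferentiableAt ℝ (fun y => g₁ y v) x := sliceX_diffAt hg₁ hx hv
    have hdg₂ : DifferentiableAt ℝ (fun y => g₂ y v) x := sliceX_diffAt hg₂ hx hv
    have H1 : HasDerivAt (fun y => ρ₁ y + ε * g₁ y v)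
        (deriv ρ₁ x + ε * deriv (fun y => g₁ y v) x) x :=
      hdρ₁.hasDerivAt.add (HasDerivAt.const_mul ε hdg₁.hasDerivAt)
    have H2 : HasDerivAt (fun y => ρ₂ y + ε * g₂ y v)
        (deriv ρ₂ x + ε * deriv (fun y => g₂ y v) x) x :=
      hdρ₂.hasDerivAt.add (HasDerivAt.const_mul ε hdg₂.hasDerivAt)
    have e1 := hB₁ x hxS v hv
    have e2 := hB₂ x hxS v hv
    rw [H1.deriv, hA₁ x hxS, hm₁ x hxS] at e1
    rw [H2.deriv, hA₂ x hxS, hm₂ x hxS] at e2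
    refine ⟨(deriv ρ₁ x - deriv ρ₂ x) + ε * (deriv (fun y => g₁ y v) x
      - deriv (fun y => g₂ y v) x), ?_, ?_⟩
    · exact (hdρ₁.hasDerivAt.sub hdρ₂.hasDerivAt).add
        (HasDerivAt.const_mul ε (hdg₁.hasDerivAt.sub hdg₂.hasDerivAt))
    · rw [hfdef, hρdef]
      linear_combination ε * e1 - ε * e2
  -- the integrand derivative
  set D : ℝ → ℝ → ℝ := fun x v =>
    (2/ε) * f x v * (σs x * (ρ x - f x v) - ε ^ 2 * σa x * f x v) with hDdef
  have hσmax0 : (0:ℝ) ≤ σmax := le_trans hσmin.le hσ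
  have hDb : ∀ x ∈ Icc (0:ℝ) 1, ∀ v ∈ Icc (-1:ℝ) 1,
      |D x v| ≤ (2/ε) * (M * (σmax * (Mρ + M) + σmax * M)) := by
    intro x hx v hv
    have h1 := hfM x hx v hv
    have h2 := hMρ x hx
    have hss := hσs x hx
    have hsa := hσa x hx
    have e1 : |σs x| ≤ σmax := by
      rw [abs_of_nonneg (le_of_lt (lt_of_lt_of_le hσmin hss.1))]; exact hss.2
    have e2 : |ρ x - f x v| ≤ Mρ + M := (abs_sub _ _).trans (by linarith)
    have e3 : |ε ^ 2 * σa x| ≤ σmax := by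
      rw [abs_of_nonneg (mul_nonneg (sq_nonneg ε) hsa.1)]
      have hε2 : ε ^ 2 ≤ 1 := by nlinarith
      have := mul_le_mul hε2 hsa.2 hsa.1 zero_le_one
      linarith
    have habs : |σs x * (ρ x - f x v) - ε ^ 2 * σa x * f x v|
        ≤ σmax * (Mρ + M) + σmax * M := by
      calc |σs x * (ρ x - f x v) - ε ^ 2 * σa x * f x v|
          ≤ |σs x * (ρ x - f x v)| + |ε ^ 2 * σa x * f x v| := abs_sub _ _
        _ = |σs x| * |ρ x - f x v| + |ε ^ 2 * σa x| * |f x v| := by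
            rw [abs_mul, abs_mul]
        _ ≤ σmax * (Mρ + M) + σmax * M := by
            have t1 := mul_le_mul e1 e2 (abs_nonneg _) hσmax0
            have t2 := mul_le_mul e3 h1 (abs_nonneg _) hσmax0
            linarith
    have hDx : |D x v| = (2/ε) * (|f x v| *
        |σs x * (ρ x - f x v) - ε ^ 2 * σa x * f x v|) := by
      simp only [hDdef]
      rw [abs_mul, abs_mul, abs_of_pos (by positivity : (0:ℝ) < 2/ε), mul_assoc]
    rw [hDx]
    have t3 : |f x v| * |σs x * (ρ x - f x v) - ε ^ 2 * σa x * f x v|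
        ≤ M * (σmax * (Mρ + M) + σmax * M) :=
      mul_le_mul h1 habs (abs_nonneg _) hM0
    exact mul_le_mul_of_nonneg_left t3 (by positivity)
  have huIoc : uIoc (-1:ℝ) 1 = Ioc (-1:ℝ) 1 := uIoc_of_le (by norm_num)
  -- the energy function
  set E : ℝ → ℝ := fun y => ∫ v in (-1:ℝ)..1, v * (f y v)^2 with hEdef
  have hEmeas : ∀ y ∈ Icc (0:ℝ) 1, AEStronglyMeasurable (fun v => v * (f y v)^2)
      (volume.restrict (Ioc (-1:ℝ) 1)) := by
    intro y hy
    exact ContinuousOn.aestronglyMeasurable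
      (((continuousOn_id.mul ((hfv_cont y hy).pow 2)).mono Ioc_subset_Icc_self))
      measurableSet_Ioc
  have hED : ∀ x ∈ Ioo (0:ℝ) 1,
      HasDerivAt E (∫ v in (-1:ℝ)..1, D x v) x := by
    intro x hx
    set δ : ℝ := min x (1 - x) with hδdef
    have hδ0 : 0 < δ := lt_min hx.1 (by linarith [hx.2])
    have hball : Metric.ball x δ ⊆ Ioo (0:ℝ) 1 := by
      intro y hy
      rw [Metric.mem_ball, Real.dist_eq] at hy
      have l1 : |y - x| < x := lt_of_lt_of_le hy (min_le_left _ _)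
      have l2 : |y - x| < 1 - x := lt_of_lt_of_le hy (min_le_right _ _)
      obtain ⟨a1, a2⟩ := abs_lt.mp l1
      obtain ⟨b1, b2⟩ := abs_lt.mp l2
      exact ⟨by linarith, by linarith⟩
    simp only [hEdef]
    refine (intervalIntegral.hasDerivAt_integral_of_dominated_loc_of_deriv_le
      (F := fun y v => v * (f y v)^2) (F' := fun y v => D y v)
      (bound := fun _ => (2/ε) * (M * (σmax * (Mρ + M) + σmax * M)))
      (Metric.ball_mem_nhds x hδ0) ?_ ?_ ?_ ?_ ?_ ?_).2
    · filter_upwards [isOpen_Ioo.mem_nhds hx] with y hy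
      rw [huIoc]
      exact hEmeas y (Ioo_subset_Icc_self hy)
    · apply ContinuousOn.intervalIntegrable
      rw [uIcc_of_le (by norm_num : (-1:ℝ) ≤ 1)]
      exact continuousOn_id.mul ((hfv_cont x (Ioo_subset_Icc_self hx)).pow 2)
    · rw [huIoc]
      apply ContinuousOn.aestronglyMeasurable _ measurableSet_Ioc
      apply ContinuousOn.mono _ (Ioc_subset_Icc_self)
      simp only [hDdef]
      exact (continuousOn_const.mul (hfv_cont x (Ioo_subset_Icc_self hx))).mul
        ((continuousOn_const.mul (continuousOn_const.sub
          (hfv_cont x (Ioo_subset_Icc_self hx)))).sub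
          (continuousOn_const.mul (hfv_cont x (Ioo_subset_Icc_self hx))))
    · apply Filter.Eventually.of_forall
      intro v hv y hy
      rw [Real.norm_eq_abs]
      exact hDb y (Ioo_subset_Icc_self (hball hy)) v
        (by rw [huIoc] at hv; exact Ioc_subset_Icc_self hv)
    · exact intervalIntegrable_const
    · apply Filter.Eventually.of_forall
      intro v hv y hy
      have hvI : v ∈ Icc (-1:ℝ) 1 := by rw [huIoc] at hv; exact Ioc_subset_Icc_self hv
      obtain ⟨d, hd, heq⟩ := hfd y (hball hy) v hvI
      have hder : HasDerivAt (fun z => v * (f z v)^2) (v * ((2:ℕ) * f y v ^ 1 * d)) y :=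
        HasDerivAt.const_mul v (hd.pow 2)
      refine hder.congr_deriv (Eq.symm ?_)
      simp only [hDdef, pow_one, Nat.cast_ofNat]
      rw [← heq, div_eq_mul_inv]
      linear_combination (2 * f y v * v * d) * (inv_mul_cancel₀ hεne)
  -- computing the integral of D
  have hvar : ∀ x ∈ Icc (0:ℝ) 1, (∫ v in (-1:ℝ)..1, (f x v - ρ x)^2)
      = (∫ v in (-1:ℝ)..1, (f x v)^2) - 2 * (ρ x)^2 := by
    intro x hx
    have hint1 := hfint x hx
    have hint2 := hf2int x hx
    have hrw : (∫ v in (-1:ℝ)..1, (f x v - ρ x)^2)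
        = ∫ v in (-1:ℝ)..1, ((f x v)^2 - (2 * ρ x) * f x v + (ρ x)^2) := by
      apply intervalIntegral.integral_congr
      intro v _
      ring
    rw [hrw, intervalIntegral.integral_add (hint2.sub (hint1.const_mul _))
        intervalIntegrable_const,
      intervalIntegral.integral_sub hint2 (hint1.const_mul _),
      intervalIntegral.integral_const_mul, hmean x hx, intervalIntegral.integral_const]
    simp only [smul_eq_mul]
    ring
  have hQge : ∀ x ∈ Icc (0:ℝ) 1, 2 * (ρ x)^2 ≤ ∫ v in (-1:ℝ)..1, (f x v)^2 := by
    intro x hx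
    have h0 : 0 ≤ ∫ v in (-1:ℝ)..1, (f x v - ρ x)^2 :=
      intervalIntegral.integral_nonneg (by norm_num) (fun u _ => sq_nonneg _)
    have := hvar x hx
    linarith
  have hintD : ∀ x ∈ Ioo (0:ℝ) 1, (∫ v in (-1:ℝ)..1, D x v)
      = (2/ε) * (σs x * (2 * (ρ x)^2 - (∫ v in (-1:ℝ)..1, (f x v)^2))
          - ε ^ 2 * σa x * (∫ v in (-1:ℝ)..1, (f x v)^2)) := by
    intro x hx
    have hxS := Ioo_subset_Icc_self hx
    have hint1 := hfint x hxS
    have hint2 := hf2int x hxS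
    have hrw : (∫ v in (-1:ℝ)..1, D x v)
        = ∫ v in (-1:ℝ)..1, (((2/ε) * σs x * ρ x) * f x v
            + (-(2/ε) * (σs x + ε ^ 2 * σa x)) * (f x v)^2) := by
      apply intervalIntegral.integral_congr
      intro v _
      simp only [hDdef]
      ring
    rw [hrw, intervalIntegral.integral_add (hint1.const_mul _) (hint2.const_mul _),
      intervalIntegral.integral_const_mul, intervalIntegral.integral_const_mul,
      hmean x hxS]
    ring
  -- derivative of the energy is nonpositive
  have hQ0 : ∀ x ∈ Icc (0:ℝ) 1, (0:ℝ) ≤ ∫ v in (-1:ℝ)..1, (f x v)^2 := by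
    intro x hx
    exact intervalIntegral.integral_nonneg (by norm_num) (fun u _ => sq_nonneg _)
  have hEle : ∀ x ∈ Ioo (0:ℝ) 1, (∫ v in (-1:ℝ)..1, D x v) ≤ 0 := by
    intro x hx
    have hxS := Ioo_subset_Icc_self hx
    rw [hintD x hx]
    have h1 := hQge x hxS
    have h2 := hQ0 x hxS
    have hss := hσs x hxS
    have hsa := hσa x hxS
    have hA : σs x * (2 * (ρ x)^2 - (∫ v in (-1:ℝ)..1, (f x v)^2)) ≤ 0 :=
      mul_nonpos_of_nonneg_of_nonpos (le_trans hσmin.le hss.1) (by linarith)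
    have hB : (0:ℝ) ≤ ε ^ 2 * σa x * (∫ v in (-1:ℝ)..1, (f x v)^2) :=
      mul_nonneg (mul_nonneg (sq_nonneg ε) hsa.1) h2
    have hC : (0:ℝ) ≤ 2/ε := by positivity
    exact mul_nonpos_of_nonneg_of_nonpos hC (by linarith)
  -- continuity of the energy
  have hEcont : ContinuousOn E (Icc (0:ℝ) 1) := by
    have hEeq : E = fun y => ∫ v in Ioc (-1:ℝ) 1, v * (f y v)^2 := by
      funext y
      rw [hEdef]
      exact intervalIntegral.integral_of_le (by norm_num)
    rw [hEeq]
    apply continuousOn_of_dominated (bound := fun _ => M^2) hEmeas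
    · intro y hy
      refine (ae_restrict_iff' measurableSet_Ioc).2 (Filter.Eventually.of_forall
        fun v hv => ?_)
      rw [Real.norm_eq_abs, abs_mul]
      have h1 : |v| ≤ 1 := abs_le.mpr ⟨hv.1.le, hv.2⟩
      have h2 := hfM y hy v (Ioc_subset_Icc_self hv)
      have h3 : |(f y v)^2| ≤ M^2 := by
        rw [abs_pow]
        exact pow_le_pow_left₀ (abs_nonneg _) h2 2
      nlinarith [abs_nonneg v, abs_nonneg ((f y v)^2)]
    · exact integrableOn_const measure_Ioc_lt_top.ne
    · refine (ae_restrict_iff' measurableSet_Ioc).2 (Filter.Eventually.of_forall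
        fun v hv => ?_)
      exact continuousOn_const.mul ((hfx_cont v (Ioc_subset_Icc_self hv)).pow 2)
  -- the energy is antitone
  have hanti : AntitoneOn E (Icc (0:ℝ) 1) := by
    apply antitoneOn_of_deriv_nonpos (convex_Icc 0 1) hEcont
    · intro x hx
      rw [interior_Icc] at hx
      exact ((hED x hx).differentiableAt).differentiableWithinAt
    · intro x hx
      rw [interior_Icc] at hx
      rw [(hED x hx).deriv]
      exact hEle x hx
  -- boundary values of f
  have hf0 : ∀ v ∈ Ioc (0:ℝ) 1, f 0 v = 0 := by
    intro v hv
    have h1 := hb0₁ v hv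
    have h2 := hb0₂ v hv
    simp only [hfdef, hρdef]
    linarith
  have hf1 : ∀ v ∈ Ico (-1:ℝ) 0, f 1 v = 0 := by
    intro v hv
    have h1 := hb1₁ v hv
    have h2 := hb1₂ v hv
    simp only [hfdef, hρdef]
    linarith
  -- energy sign at the boundary
  have hE0 : E 0 ≤ 0 := by
    have h : (0:ℝ) ≤ ∫ v in (-1:ℝ)..1, -(v * (f 0 v)^2) := by
      apply intervalIntegral.integral_nonneg (by norm_num)
      intro u hu
      rcases le_or_gt u 0 with h | h
      · nlinarith [sq_nonneg (f 0 u)]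
      · rw [hf0 u ⟨h, hu.2⟩]
        simp
    rw [intervalIntegral.integral_neg] at h
    simp only [hEdef]
    linarith
  have hE1 : 0 ≤ E 1 := by
    apply intervalIntegral.integral_nonneg (by norm_num)
    intro u hu
    rcases lt_or_ge u 0 with h | h
    · rw [hf1 u ⟨hu.1, h⟩]
      simp
    · positivity
  -- energy vanishes identically
  have hEzero : ∀ x ∈ Icc (0:ℝ) 1, E x = 0 := by
    intro x hx
    have h0 : (0:ℝ) ∈ Icc (0:ℝ) 1 := by norm_num
    have h1 : (1:ℝ) ∈ Icc (0:ℝ) 1 := by norm_num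
    have l1 : E x ≤ E 0 := hanti h0 hx hx.1
    have l2 : E 1 ≤ E x := hanti hx h1 hx.2
    linarith
  -- hence derivative of energy vanishes
  have hDzero : ∀ x ∈ Ioo (0:ℝ) 1, (∫ v in (-1:ℝ)..1, D x v) = 0 := by
    intro x hx
    have h1 := (hED x hx).deriv
    have h2 : E =ᶠ[nhds x] fun _ => (0:ℝ) := by
      filter_upwards [isOpen_Ioo.mem_nhds hx] with y hy
      exact hEzero y (Ioo_subset_Icc_self hy)
    have h3 : deriv E x = 0 := by
      rw [h2.deriv_eq, deriv_const]
    rw [← h1, h3]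
  -- pointwise: the variance vanishes
  have hQeq : ∀ x ∈ Ioo (0:ℝ) 1, (∫ v in (-1:ℝ)..1, (f x v)^2) = 2 * (ρ x)^2 := by
    intro x hx
    have hxS := Ioo_subset_Icc_self hx
    have h1 := hDzero x hx
    rw [hintD x hx] at h1
    have h2 : σs x * (2 * (ρ x)^2 - (∫ v in (-1:ℝ)..1, (f x v)^2))
        - ε ^ 2 * σa x * (∫ v in (-1:ℝ)..1, (f x v)^2) = 0 := by
      have hne2 : (2:ℝ)/ε ≠ 0 := by positivity
      exact (mul_eq_zero.mp h1).resolve_left hne2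
    have h3 := hQge x hxS
    have h4 := hQ0 x hxS
    have hss := hσs x hxS
    have hsa := hσa x hxS
    exact arith_Q (lt_of_lt_of_le hσmin hss.1) (mul_nonneg (sq_nonneg ε) hsa.1) h2 h3 h4
  -- pointwise: f is constant in v on the interior
  have hfρ : ∀ x ∈ Ioo (0:ℝ) 1, ∀ v ∈ Icc (-1:ℝ) 1, f x v = ρ x := by
    intro x hx v hv
    have hxS := Ioo_subset_Icc_self hx
    have hzero : (∫ v in (-1:ℝ)..1, (f x v - ρ x)^2) = 0 := by
      rw [hvar x hxS, hQeq x hx]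
      ring
    rw [intervalIntegral.integral_of_le (by norm_num : (-1:ℝ) ≤ 1)] at hzero
    have hcont : ContinuousOn (fun v => (f x v - ρ x)^2) (Icc (-1:ℝ) 1) :=
      ((hfv_cont x hxS).sub continuousOn_const).pow 2
    have hint : IntegrableOn (fun v => (f x v - ρ x)^2) (Ioc (-1:ℝ) 1) volume :=
      (hcont.integrableOn_Icc).mono_set Ioc_subset_Icc_self
    have hae : (fun v => (f x v - ρ x)^2) =ᵐ[volume.restrict (Ioc (-1:ℝ) 1)]
        (fun _ => (0:ℝ)) :=
      (integral_eq_zero_iff_of_nonneg_ae (Filter.Eventually.of_forall fun v => sq_nonneg _)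
        hint).mp hzero
    rw [Measure.restrict_congr_set Ioc_ae_eq_Icc] at hae
    have heq := Measure.eqOn_Icc_of_ae_eq volume (by norm_num : (-1:ℝ) ≠ 1) hae hcont
      continuousOn_const
    have h6 : (f x v - ρ x)^2 = 0 := heq hv
    have h5 : f x v - ρ x = 0 := by
      exact pow_eq_zero_iff two_ne_zero |>.mp h6
    linarith [h5]
  -- g₁ = g₂ on the interior, then everywhere by continuity
  have hgIoo : ∀ x ∈ Ioo (0:ℝ) 1, ∀ v ∈ Icc (-1:ℝ) 1, g₁ x v = g₂ x v := by
    intro x hx v hv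
    have h := hfρ x hx v hv
    simp only [hfdef] at h
    have h2 : ε * (g₁ x v - g₂ x v) = 0 := by linarith
    have h3 := (mul_eq_zero.mp h2).resolve_left hεne
    linarith
  have hgAll : ∀ x ∈ Icc (0:ℝ) 1, ∀ v ∈ Icc (-1:ℝ) 1, g₁ x v = g₂ x v := by
    intro x hx v hv
    have hc : ContinuousWithinAt (fun y => g₁ y v - g₂ y v) (Icc (0:ℝ) 1) x :=
      ((sliceX_contOn hg₁ hv).sub (sliceX_contOn hg₂ hv)) x hx
    have hne : (nhdsWithin x (Ioo (0:ℝ) 1)).NeBot := by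
      apply mem_closure_iff_nhdsWithin_neBot.mp
      rw [closure_Ioo (by norm_num : (0:ℝ) ≠ 1)]
      exact hx
    have ht1 : Filter.Tendsto (fun y => g₁ y v - g₂ y v) (nhdsWithin x (Ioo (0:ℝ) 1))
        (nhds (g₁ x v - g₂ x v)) :=
      hc.mono_left (nhdsWithin_mono x Ioo_subset_Icc_self)
    have ht2 : Filter.Tendsto (fun y => g₁ y v - g₂ y v) (nhdsWithin x (Ioo (0:ℝ) 1))
        (nhds 0) := by
      apply Filter.Tendsto.congr' _ tendsto_const_nhds
      filter_upwards [self_mem_nhdsWithin] with y hy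
      rw [sub_eq_zero.mpr (hgIoo y hy v hv)]
    have := tendsto_nhds_unique ht1 ht2
    linarith [this]
  -- the derivative of ρ vanishes on the interior
  have hρzero : ∀ x ∈ Ioo (0:ℝ) 1, HasDerivAt ρ 0 x := by
    intro x hx
    obtain ⟨d1, hd1, he1⟩ := hfd x hx 1 (by norm_num)
    obtain ⟨d2, hd2, he2⟩ := hfd x hx (-1) (by norm_num)
    have hco : ∀ v, v ∈ Icc (-1:ℝ) 1 → (fun y => f y v) =ᶠ[nhds x] ρ := by
      intro v hv
      filter_upwards [isOpen_Ioo.mem_nhds hx] with y hy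
      exact hfρ y hy v hv
    have hr1 : HasDerivAt ρ d1 x := hd1.congr_of_eventuallyEq (hco 1 (by norm_num)).symm
    have hr2 : HasDerivAt ρ d2 x := hd2.congr_of_eventuallyEq (hco (-1) (by norm_num)).symm
    have hd12 : d1 = d2 := hr1.unique hr2
    have hfx1 : f x 1 = ρ x := hfρ x hx 1 (by norm_num)
    have hfx2 : f x (-1) = ρ x := hfρ x hx (-1) (by norm_num)
    rw [hfx1] at he1
    rw [hfx2, ← hd12] at he2
    have hd0 : ε * d1 = 0 := by linarith
    have : d1 = 0 := (mul_eq_zero.mp hd0).resolve_left hεne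
    rw [← this]
    exact hr1
  -- hence ρ is constant on [0,1]
  have hρmono : MonotoneOn ρ (Icc (0:ℝ) 1) := by
    apply monotoneOn_of_deriv_nonneg (convex_Icc 0 1) hρcont
    · intro x hx
      rw [interior_Icc] at hx
      exact ((hρzero x hx).differentiableAt).differentiableWithinAt
    · intro x hx
      rw [interior_Icc] at hx
      rw [(hρzero x hx).deriv]
  have hρanti : AntitoneOn ρ (Icc (0:ℝ) 1) := by
    apply antitoneOn_of_deriv_nonpos (convex_Icc 0 1) hρcont
    · intro x hx
      rw [interior_Icc] at hx
      exact ((hρzero x hx).differentiableAt).differentiableWithinAt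
    · intro x hx
      rw [interior_Icc] at hx
      rw [(hρzero x hx).deriv]
  -- and ρ(0) = 0 from the boundary condition
  have hρ0 : ρ 0 = 0 := by
    have h1 := hb0₁ 1 ⟨by norm_num, le_refl 1⟩
    have h2 := hb0₂ 1 ⟨by norm_num, le_refl 1⟩
    have h3 := hgAll 0 ⟨le_refl 0, by norm_num⟩ 1 ⟨by norm_num, le_refl 1⟩
    rw [h3] at h1
    simp only [hρdef]
    linarith
  have hρall : ∀ x ∈ Icc (0:ℝ) 1, ρ x = 0 := by
    intro x hx
    have h0 : (0:ℝ) ∈ Icc (0:ℝ) 1 := by norm_num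
    have l1 := hρmono h0 hx hx.1
    have l2 := hρanti h0 hx hx.1
    linarith
  constructor
  · intro x hx
    have := hρall x hx
    simp only [hρdef] at this
    linarith
  · exact hgAll
end

section
/- Zero flux for half-space solutions converging at infinity: let f ∈ C¹([0,∞) × [−1,1]) be bounded, satisfy v ∂_z f(z,v) = ⟨f(z,·)⟩ − f(z,v) for all (z,v), and suppose there exists a constant c ∈ ℝ with f(z,v) → c as z → ∞ for every v ∈ [−1,1]. Then (1/2)∫_{−1}^{1} v f(z,v) dv = 0 for every z ≥ 0. -/
open MeasureTheory Set Function Filter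

/-- Zero flux for half-space solutions converging at infinity: if
`f ∈ C¹([0,∞) × [−1,1])` is bounded, satisfies `v ∂_z f(z,v) = ⟨f(z,·)⟩ − f(z,v)` for
all `z ≥ 0`, `v ∈ [−1,1]`, and `f(z,v) → c` as `z → ∞` for every `v ∈ [−1,1]` with `c`
independent of `v`, then `(1/2)∫_{−1}^{1} v f(z,v) dv = 0` for every `z ≥ 0`. -/
theorem halfspace_zero_flux (f : ℝ → ℝ → ℝ)
    (hf : ContDiffOn ℝ 1 (uncurry f) (Ici (0:ℝ) ×ˢ Icc (-1:ℝ) 1))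
    (hbdd : ∃ M : ℝ, ∀ z ∈ Ici (0:ℝ), ∀ v ∈ Icc (-1:ℝ) 1, |f z v| ≤ M)
    (heq : ∀ z ∈ Ici (0:ℝ), ∀ v ∈ Icc (-1:ℝ) 1,
      v * deriv (fun z' => f z' v) z
        = ((1/2) * ∫ w in (-1:ℝ)..1, f z w) - f z v)
    (c : ℝ)
    (hlim : ∀ v ∈ Icc (-1:ℝ) 1, Tendsto (fun z => f z v) atTop (nhds c)) :
    ∀ z ∈ Ici (0:ℝ), ((1/2) * ∫ v in (-1:ℝ)..1, v * f z v) = 0 := by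
  obtain ⟨M, hM⟩ := hbdd
  have h11 : (-1:ℝ) ≤ 1 := by norm_num
  have hIoc : uIoc (-1:ℝ) 1 = Ioc (-1:ℝ) 1 := uIoc_of_le h11
  have hIocIcc : Ioc (-1:ℝ) 1 ⊆ Icc (-1:ℝ) 1 := Ioc_subset_Icc_self
  have hcont : ContinuousOn (uncurry f) (Ici (0:ℝ) ×ˢ Icc (-1:ℝ) 1) := hf.continuousOn
  -- continuity in z for fixed v
  have hfv : ∀ v ∈ Icc (-1:ℝ) 1, ContinuousOn (fun z => f z v) (Ici (0:ℝ)) := by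
    intro v hv
    exact hcont.comp (continuous_id.prodMk continuous_const).continuousOn
      (fun z hz => ⟨hz, hv⟩)
  -- continuity in v for fixed z
  have hfz : ∀ z ∈ Ici (0:ℝ), ContinuousOn (f z) (Icc (-1:ℝ) 1) := by
    intro z hz
    exact hcont.comp (continuous_const.prodMk continuous_id).continuousOn
      (fun v hv => ⟨hz, hv⟩)
  set avg : ℝ → ℝ := fun s => (1/2) * ∫ w in (-1:ℝ)..1, f s w with havg
  -- continuity of the average
  have havgcont : ContinuousOn avg (Ici (0:ℝ)) := by
    apply ContinuousOn.mul continuousOn_const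
    intro s hs
    apply intervalIntegral.continuousWithinAt_of_dominated_interval
      (bound := fun _ => M)
    · filter_upwards [self_mem_nhdsWithin] with x hx
      rw [hIoc]
      exact ((hfz x hx).mono hIocIcc).aestronglyMeasurable measurableSet_Ioc
    · filter_upwards [self_mem_nhdsWithin] with x hx
      filter_upwards with t ht
      rw [hIoc] at ht
      simpa using hM x hx t (hIocIcc ht)
    · exact intervalIntegrable_const
    · filter_upwards with t ht
      rw [hIoc] at ht
      exact (hfv t (hIocIcc ht) s hs)
  -- derivative of v * f z v
  have hderiv : ∀ v ∈ Icc (-1:ℝ) 1, ∀ s : ℝ, 0 < s →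
      HasDerivAt (fun z => v * f z v) (avg s - f s v) s := by
    intro v hv s hs
    have h1 : ContDiffOn ℝ 1 (fun z => f z v) (Ici (0:ℝ)) :=
      hf.comp ((contDiff_id.prodMk contDiff_const).contDiffOn) (fun z hz => ⟨hz, hv⟩)
    have hdiff : DifferentiableAt ℝ (fun z => f z v) s :=
      (h1.differentiableOn one_ne_zero).differentiableAt (Ici_mem_nhds hs)
    have h2 := hdiff.hasDerivAt.const_mul v
    rwa [heq s (le_of_lt hs) v hv] at h2
  -- FTC
  have hFTC : ∀ z ∈ Ici (0:ℝ), ∀ Z : ℝ, z ≤ Z → ∀ v ∈ Icc (-1:ℝ) 1,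
      (∫ s in z..Z, (avg s - f s v)) = v * f Z v - v * f z v := by
    intro z hz Z hzZ v hv
    have hIcc : Icc z Z ⊆ Ici (0:ℝ) := fun s hs => le_trans hz hs.1
    apply intervalIntegral.integral_eq_sub_of_hasDeriv_right_of_le hzZ
    · exact continuousOn_const.mul ((hfv v hv).mono hIcc)
    · intro s hs
      exact (hderiv v hv s (lt_of_le_of_lt hz hs.1)).hasDerivWithinAt
    · apply ContinuousOn.intervalIntegrable
      rw [uIcc_of_le hzZ]
      exact (havgcont.mono hIcc).sub ((hfv v hv).mono hIcc)
  -- inner integral vanishes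
  have hinner : ∀ s ∈ Ici (0:ℝ), (∫ v in (-1:ℝ)..1, (avg s - f s v)) = 0 := by
    intro s hs
    have h1 : IntervalIntegrable (f s) volume (-1) 1 := by
      apply ContinuousOn.intervalIntegrable
      rw [uIcc_of_le h11]
      exact hfz s hs
    rw [intervalIntegral.integral_sub intervalIntegrable_const h1,
      intervalIntegral.integral_const]
    simp only [havg, smul_eq_mul]
    ring
  -- Fubini
  have hswap : ∀ z ∈ Ici (0:ℝ), ∀ Z : ℝ, z ≤ Z →
      (∫ v in (-1:ℝ)..1, ∫ s in z..Z, (avg s - f s v))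
        = ∫ s in z..Z, ∫ v in (-1:ℝ)..1, (avg s - f s v) := by
    intro z hz Z hzZ
    have hIcc : Icc z Z ⊆ Ici (0:ℝ) := fun s hs => le_trans hz hs.1
    have hker : ContinuousOn (fun p : ℝ × ℝ => avg p.2 - f p.2 p.1)
        (Icc (-1:ℝ) 1 ×ˢ Icc z Z) := by
      apply ContinuousOn.sub
      · exact havgcont.comp continuous_snd.continuousOn (fun p hp => hIcc hp.2)
      · exact hcont.comp (continuous_snd.prodMk continuous_fst).continuousOn
          (fun p hp => ⟨hIcc hp.2, hp.1⟩)
    have hint : Integrable (uncurry (fun v s => avg s - f s v))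
        ((volume.restrict (Ioc (-1:ℝ) 1)).prod (volume.restrict (Ioc z Z))) := by
      rw [Measure.prod_restrict]
      have h2 : IntegrableOn (fun p : ℝ × ℝ => avg p.2 - f p.2 p.1)
          (Icc (-1:ℝ) 1 ×ˢ Icc z Z) volume :=
        hker.integrableOn_compact (isCompact_Icc.prod isCompact_Icc)
      exact h2.mono_set (prod_mono Ioc_subset_Icc_self Ioc_subset_Icc_self)
    rw [intervalIntegral.integral_of_le h11, intervalIntegral.integral_of_le hzZ]
    simp_rw [intervalIntegral.integral_of_le hzZ, intervalIntegral.integral_of_le h11]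
    exact MeasureTheory.integral_integral_swap hint
  -- flux is constant
  have hconst : ∀ z ∈ Ici (0:ℝ), ∀ Z : ℝ, z ≤ Z →
      (∫ v in (-1:ℝ)..1, v * f Z v) = ∫ v in (-1:ℝ)..1, v * f z v := by
    intro z hz Z hzZ
    have hZ0 : Z ∈ Ici (0:ℝ) := le_trans hz hzZ
    have h1 := hswap z hz Z hzZ
    have h2 : (∫ s in z..Z, ∫ v in (-1:ℝ)..1, (avg s - f s v)) = 0 := by
      rw [intervalIntegral.integral_congr (g := fun _ => (0:ℝ))
        (fun s hs => hinner s (by rw [uIcc_of_le hzZ] at hs; exact le_trans hz hs.1))]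
      simp
    have h3 : (∫ v in (-1:ℝ)..1, ∫ s in z..Z, (avg s - f s v))
        = ∫ v in (-1:ℝ)..1, (v * f Z v - v * f z v) :=
      intervalIntegral.integral_congr
        (fun v hv => hFTC z hz Z hzZ v (by rwa [uIcc_of_le h11] at hv))
    have hiZ : IntervalIntegrable (fun v => v * f Z v) volume (-1) 1 := by
      apply ContinuousOn.intervalIntegrable
      rw [uIcc_of_le h11]
      exact continuousOn_id.mul (hfz Z hZ0)
    have hiz : IntervalIntegrable (fun v => v * f z v) volume (-1) 1 := by
      apply ContinuousOn.intervalIntegrable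
      rw [uIcc_of_le h11]
      exact continuousOn_id.mul (hfz z hz)
    have h4 := h1.symm.trans h3
    rw [intervalIntegral.integral_sub hiZ hiz, h2] at h4
    linarith
  -- conclude
  intro z hz
  have hlim2 : Tendsto (fun Z => ∫ v in (-1:ℝ)..1, v * f Z v) atTop
      (nhds (∫ v in (-1:ℝ)..1, v * c)) := by
    apply intervalIntegral.tendsto_integral_filter_of_dominated_convergence
      (bound := fun _ => M)
    · filter_upwards [eventually_ge_atTop (0:ℝ)] with Z hZ
      rw [hIoc]
      exact ((continuousOn_id.mul (hfz Z hZ)).mono hIocIcc).aestronglyMeasurable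
        measurableSet_Ioc
    · filter_upwards [eventually_ge_atTop (0:ℝ)] with Z hZ
      filter_upwards with v hv
      rw [hIoc] at hv
      have h1 := hM Z hZ v (hIocIcc hv)
      have h2 : |v| ≤ 1 := abs_le.2 ⟨(hIocIcc hv).1, (hIocIcc hv).2⟩
      have h3 : |v * f Z v| ≤ |f Z v| := by
        rw [abs_mul]
        nlinarith [abs_nonneg (f Z v), abs_nonneg v]
      rw [Real.norm_eq_abs]
      exact le_trans h3 h1
    · exact intervalIntegrable_const
    · filter_upwards with v hv
      rw [hIoc] at hv
      exact (hlim v (hIocIcc hv)).const_mul v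
  have hcv : (∫ v in (-1:ℝ)..1, v * c) = 0 := by
    rw [intervalIntegral.integral_mul_const, integral_id]
    norm_num
  have hev : (fun Z => ∫ v in (-1:ℝ)..1, v * f Z v) =ᶠ[atTop]
      (fun _ => ∫ v in (-1:ℝ)..1, v * f z v) := by
    filter_upwards [eventually_ge_atTop z] with Z hZ
    exact hconst z hz Z hZ
  have hlim3 : Tendsto (fun Z => ∫ v in (-1:ℝ)..1, v * f Z v) atTop
      (nhds (∫ v in (-1:ℝ)..1, v * f z v)) :=
    Tendsto.congr' hev.symm tendsto_const_nhds
  have := tendsto_nhds_unique hlim3 hlim2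
  rw [this, hcv, mul_zero]
end

section
/- Energy identity for the perturbed 1D RTE: let ε > 0, let σ_s, σ_a ∈ C([0,1]), ξ ∈ C([0,1]), η ∈ C(Ω), and let f ∈ C¹(Ω) satisfy ε v ∂_x f = σ_s(x)(⟨f⟩ − f) − ε² σ_a(x) f + ε² ξ(x) + ε η(x,v) on Ω. Then (ε/2)∫_{−1}^{1} v ( f(1,v)² − f(0,v)² ) dv + ∫₀¹ σ_s(x) ∫_{−1}^{1} ( f(x,v) − ⟨f⟩(x) )² dv dx + ε² ∫₀¹∫_{−1}^{1} σ_a(x) f(x,v)² dv dx = ε² ∫₀¹∫_{−1}^{1} ξ(x) f(x,v) dv dx + ε ∫₀¹∫_{−1}^{1} η(x,v) f(x,v) dv dx. -/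
open MeasureTheory Set Function

lemma tietze_ext {X : Type*} [TopologicalSpace X] [NormalSpace X] {s : Set X}
    (hs : IsClosed s) {h : X → ℝ} (hh : ContinuousOn h s) :
    ∃ H : X → ℝ, Continuous H ∧ ∀ x ∈ s, H x = h x := by
  obtain ⟨g, hg⟩ := ContinuousMap.exists_restrict_eq hs ⟨s.restrict h, hh.restrict⟩
  refine ⟨g, g.continuous, fun x hx => ?_⟩
  have := congrFun (congrArg ContinuousMap.toFun hg) ⟨x, hx⟩
  exact this

lemma sec_hasDerivAt (f : ℝ → ℝ → ℝ)
    (hf : ContDiffOn ℝ 1 (uncurry f) (Icc (0:ℝ) 1 ×ˢ Icc (-1:ℝ) 1))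
    {x v : ℝ} (hx : x ∈ Ioo (0:ℝ) 1) (hv : v ∈ Icc (-1:ℝ) 1) :
    HasDerivAt (fun y => f y v) (deriv (fun y => f y v) x) x := by
  have hxI : x ∈ Icc (0:ℝ) 1 := Ioo_subset_Icc_self hx
  have hd : DifferentiableWithinAt ℝ (uncurry f) (Icc (0:ℝ) 1 ×ˢ Icc (-1:ℝ) 1) (x, v) :=
    (hf.differentiableOn one_ne_zero) _ ⟨hxI, hv⟩
  obtain ⟨L, hL⟩ := hd
  have hφ : HasDerivWithinAt (fun y : ℝ => (y, v)) ((1:ℝ), (0:ℝ)) (Icc 0 1) x :=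
    ((hasDerivAt_id x).prodMk (hasDerivAt_const x v)).hasDerivWithinAt
  have hcomp : HasDerivWithinAt (fun y => f y v) (L (1, 0)) (Icc 0 1) x :=
    by have := hL.comp_hasDerivWithinAt x hφ (fun y hy => (⟨hy, hv⟩ : (y, v) ∈ Icc (0:ℝ) 1 ×ˢ Icc (-1:ℝ) 1)); exact this
  have h2 : HasDerivAt (fun y => f y v) (L (1, 0)) x :=
    hcomp.hasDerivAt (Icc_mem_nhds hx.1 hx.2)
  rw [h2.deriv]; exact h2

/-- Energy identity for the perturbed 1D RTE: if `f ∈ C¹(Ω)` satisfies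
`ε v ∂_x f = σ_s(⟨f⟩ − f) − ε² σ_a f + ε² ξ(x) + ε η(x,v)` on `Ω = [0,1] × [−1,1]`, then
`(ε/2)∫ v (f(1,v)² − f(0,v)²) dv + ∫∫ σ_s (f − ⟨f⟩)² dv dx + ε² ∫∫ σ_a f² dv dx
  = ε² ∫∫ ξ f dv dx + ε ∫∫ η f dv dx`. -/
theorem energy_identity_perturbed_rte (ε : ℝ) (hε : 0 < ε)
    (σs σa ξ : ℝ → ℝ) (η f : ℝ → ℝ → ℝ)
    (hσs : ContinuousOn σs (Icc 0 1)) (hσa : ContinuousOn σa (Icc 0 1))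
    (hξ : ContinuousOn ξ (Icc 0 1))
    (hη : ContinuousOn (uncurry η) (Icc (0:ℝ) 1 ×ˢ Icc (-1:ℝ) 1))
    (hf : ContDiffOn ℝ 1 (uncurry f) (Icc (0:ℝ) 1 ×ˢ Icc (-1:ℝ) 1))
    (hpde : ∀ x ∈ Icc (0:ℝ) 1, ∀ v ∈ Icc (-1:ℝ) 1,
      ε * v * deriv (fun y => f y v) x
        = σs x * (vavg f x - f x v) - ε ^ 2 * σa x * f x v + ε ^ 2 * ξ x + ε * η x v) :
    (ε / 2) * (∫ v in (-1:ℝ)..1, v * ((f 1 v) ^ 2 - (f 0 v) ^ 2))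
      + (∫ x in (0:ℝ)..1, σs x * ∫ v in (-1:ℝ)..1, (f x v - vavg f x) ^ 2)
      + ε ^ 2 * (∫ x in (0:ℝ)..1, ∫ v in (-1:ℝ)..1, σa x * (f x v) ^ 2)
      = ε ^ 2 * (∫ x in (0:ℝ)..1, ∫ v in (-1:ℝ)..1, ξ x * f x v)
        + ε * (∫ x in (0:ℝ)..1, ∫ v in (-1:ℝ)..1, η x v * f x v) := by
  have huIcc1 : uIcc (0:ℝ) 1 = Icc (0:ℝ) 1 := uIcc_of_le zero_le_one
  have huIcc2 : uIcc (-1:ℝ) 1 = Icc (-1:ℝ) 1 := uIcc_of_le (by norm_num)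
  have hrect : IsClosed (Icc (0:ℝ) 1 ×ˢ Icc (-1:ℝ) 1) := isClosed_Icc.prod isClosed_Icc
  obtain ⟨F2, hF2c, hF2⟩ := tietze_ext hrect hf.continuousOn
  obtain ⟨E2, hE2c, hE2⟩ := tietze_ext hrect hη
  obtain ⟨S, hSc, hS⟩ := tietze_ext isClosed_Icc hσs
  obtain ⟨A, hAc, hA⟩ := tietze_ext isClosed_Icc hσa
  obtain ⟨Ξ, hΞc, hΞ⟩ := tietze_ext isClosed_Icc hξ
  set F : ℝ → ℝ → ℝ := fun x v => F2 (x, v) with hFdef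
  set E : ℝ → ℝ → ℝ := fun x v => E2 (x, v) with hEdef
  have hFc : Continuous (uncurry F) := by exact hF2c
  have hEc : Continuous (uncurry E) := by exact hE2c
  have hFeq : ∀ x ∈ Icc (0:ℝ) 1, ∀ v ∈ Icc (-1:ℝ) 1, F x v = f x v :=
    fun x hx v hv => hF2 (x, v) ⟨hx, hv⟩
  have hEeq : ∀ x ∈ Icc (0:ℝ) 1, ∀ v ∈ Icc (-1:ℝ) 1, E x v = η x v :=
    fun x hx v hv => hE2 (x, v) ⟨hx, hv⟩
  set c : ℝ → ℝ := vavg F with hcdef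
  have hcc : Continuous c := by
    have := intervalIntegral.continuous_parametric_intervalIntegral_of_continuous'
      (μ := volume) (f := F) hFc (-1) 1
    show Continuous (fun x => (1/2:ℝ) * ∫ v in (-1:ℝ)..1, F x v)
    exact continuous_const.mul this
  have hFsec : ∀ x : ℝ, Continuous (fun v => F x v) := fun x =>
    hFc.comp (Continuous.prodMk_right x)
  have hEsec : ∀ x : ℝ, Continuous (fun v => E x v) := fun x =>
    hEc.comp (Continuous.prodMk_right x)
  have hveq : ∀ x ∈ Icc (0:ℝ) 1, c x = vavg f x := by
    intro x hx
    have : (∫ v in (-1:ℝ)..1, F x v) = ∫ v in (-1:ℝ)..1, f x v := by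
      apply intervalIntegral.integral_congr
      intro v hv
      rw [huIcc2] at hv
      exact hFeq x hx v hv
    simp only [hcdef, vavg, this]
  set G : ℝ → ℝ → ℝ := fun x v =>
    (S x * (c x - F x v) - ε ^ 2 * A x * F x v + ε ^ 2 * Ξ x + ε * E x v) * F x v with hGdef
  have hGc : Continuous (uncurry G) := by
    apply Continuous.mul
    · apply Continuous.add
      · apply Continuous.add
        · apply Continuous.sub
          · exact ((hSc.comp continuous_fst).mul
              ((hcc.comp continuous_fst).sub hFc))
          · exact (continuous_const.mul (hAc.comp continuous_fst)).mul hFc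
        · exact continuous_const.mul (hΞc.comp continuous_fst)
      · exact continuous_const.mul hEc
    · exact hFc
  have hGxsec : ∀ v : ℝ, Continuous (fun x => G x v) := fun v =>
    hGc.comp (continuous_id.prodMk continuous_const)
  have hGvsec : ∀ x : ℝ, Continuous (fun v => G x v) := fun x =>
    hGc.comp (Continuous.prodMk_right x)
  -- Step B : FTC in x for each fixed v
  have stepB : ∀ v ∈ Icc (-1:ℝ) 1,
      (∫ x in (0:ℝ)..1, G x v) = ε * v / 2 * ((F 1 v) ^ 2 - (F 0 v) ^ 2) := by
    intro v hv
    have key : ∀ x ∈ Ioo (0:ℝ) 1,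
        HasDerivWithinAt (fun y => ε * v / 2 * (F y v) ^ 2) (G x v) (Ioi x) x := by
      intro x hx
      have hxI : x ∈ Icc (0:ℝ) 1 := Ioo_subset_Icc_self hx
      have h1 := sec_hasDerivAt f hf hx hv
      have heq : (fun y => F y v) =ᶠ[nhds x] fun y => f y v :=
        Filter.eventually_of_mem (Icc_mem_nhds hx.1 hx.2) (fun y hy => hFeq y hy v hv)
      have h1' : HasDerivAt (fun y => F y v) (deriv (fun y => f y v) x) x :=
        h1.congr_of_eventuallyEq heq
      have h2 : HasDerivAt (fun y => ε * v / 2 * (F y v) ^ 2)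
          (ε * v * (f x v * deriv (fun y => f y v) x)) x := by
        have := (h1'.pow 2).const_mul (ε * v / 2)
        refine this.congr_deriv ?_
        rw [hFeq x hxI v hv]
        push_cast
        ring
      have e : G x v = ε * v * (f x v * deriv (fun y => f y v) x) := by
        simp only [hGdef]
        rw [hS x hxI, hA x hxI, hΞ x hxI, hveq x hxI, hFeq x hxI v hv, hEeq x hxI v hv,
          ← hpde x hxI v hv]
        ring
      rw [e]
      exact h2.hasDerivWithinAt
    have hcont : ContinuousOn (fun y => ε * v / 2 * (F y v) ^ 2) (Icc 0 1) :=
      (continuous_const.mul ((hFc.comp (continuous_id.prodMk continuous_const)).pow 2)).continuousOn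
    have hint : IntervalIntegrable (fun x => G x v) volume 0 1 :=
      (hGxsec v).intervalIntegrable 0 1
    have := intervalIntegral.integral_eq_sub_of_hasDeriv_right_of_le zero_le_one hcont key hint
    rw [this]; ring
  -- Step C : the v-integral identity for every x
  have stepC : ∀ x : ℝ,
      (∫ v in (-1:ℝ)..1, G x v)
        = -(S x * ∫ v in (-1:ℝ)..1, (F x v - c x) ^ 2)
          - ε ^ 2 * (∫ v in (-1:ℝ)..1, A x * (F x v) ^ 2)
          + ε ^ 2 * (∫ v in (-1:ℝ)..1, Ξ x * F x v)
          + ε * (∫ v in (-1:ℝ)..1, E x v * F x v) := by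
    intro x
    have hFv := hFsec x
    have hEv := hEsec x
    have iF : IntervalIntegrable (fun v => F x v) volume (-1) 1 := hFv.intervalIntegrable _ _
    have iF2 : IntervalIntegrable (fun v => (F x v) ^ 2) volume (-1) 1 :=
      (hFv.pow 2).intervalIntegrable _ _
    have iEF : IntervalIntegrable (fun v => E x v * F x v) volume (-1) 1 :=
      (hEv.mul hFv).intervalIntegrable _ _
    have hI : (∫ v in (-1:ℝ)..1, F x v) = 2 * c x := by
      simp only [hcdef, vavg]; ring
    have A1 : (∫ v in (-1:ℝ)..1, (F x v - c x) ^ 2)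
        = (∫ v in (-1:ℝ)..1, (F x v) ^ 2) - 2 * (c x) ^ 2 := by
      have h0 : (∫ v in (-1:ℝ)..1, (F x v - c x) ^ 2)
          = ∫ v in (-1:ℝ)..1, ((F x v) ^ 2 - 2 * c x * F x v + (c x) ^ 2) :=
        intervalIntegral.integral_congr (fun v _ => by ring)
      rw [h0, intervalIntegral.integral_add (iF2.sub ((iF.const_mul _)))
          (intervalIntegrable_const),
        intervalIntegral.integral_sub iF2 (iF.const_mul _),
        intervalIntegral.integral_const_mul, hI, intervalIntegral.integral_const]
      simp only [smul_eq_mul]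
      ring
    have B1 : (∫ v in (-1:ℝ)..1, G x v)
        = S x * (c x * (2 * c x) - (∫ v in (-1:ℝ)..1, (F x v) ^ 2))
          - ε ^ 2 * (∫ v in (-1:ℝ)..1, A x * (F x v) ^ 2)
          + ε ^ 2 * (∫ v in (-1:ℝ)..1, Ξ x * F x v)
          + ε * (∫ v in (-1:ℝ)..1, E x v * F x v) := by
      have h0 : (∫ v in (-1:ℝ)..1, G x v)
          = ∫ v in (-1:ℝ)..1,
            (S x * (c x * F x v - (F x v) ^ 2) - ε ^ 2 * (A x * (F x v) ^ 2)
              + ε ^ 2 * (Ξ x * F x v) + ε * (E x v * F x v)) :=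
        intervalIntegral.integral_congr (fun v _ => by simp only [hGdef]; ring)
      have i1 : IntervalIntegrable (fun v => S x * (c x * F x v - (F x v) ^ 2)) volume (-1) 1 :=
        ((iF.const_mul _).sub iF2).const_mul _
      have i2 : IntervalIntegrable (fun v => ε ^ 2 * (A x * (F x v) ^ 2)) volume (-1) 1 :=
        (iF2.const_mul _).const_mul _
      have i3 : IntervalIntegrable (fun v => ε ^ 2 * (Ξ x * F x v)) volume (-1) 1 :=
        (iF.const_mul _).const_mul _
      have i4 : IntervalIntegrable (fun v => ε * (E x v * F x v)) volume (-1) 1 :=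
        iEF.const_mul _
      rw [h0, intervalIntegral.integral_add ((i1.sub i2).add i3) i4,
        intervalIntegral.integral_add (i1.sub i2) i3,
        intervalIntegral.integral_sub i1 i2,
        intervalIntegral.integral_const_mul, intervalIntegral.integral_const_mul,
        intervalIntegral.integral_const_mul,
        intervalIntegral.integral_sub (iF.const_mul _) iF2,
        intervalIntegral.integral_const_mul, hI]
      simp only [intervalIntegral.integral_const_mul]
    rw [B1, A1]; ring
  -- Step D : Fubini
  have swap : (∫ v in (-1:ℝ)..1, ∫ x in (0:ℝ)..1, G x v)
      = ∫ x in (0:ℝ)..1, ∫ v in (-1:ℝ)..1, G x v := by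
    simp_rw [intervalIntegral.integral_of_le (show (-1:ℝ) ≤ 1 by norm_num),
      intervalIntegral.integral_of_le zero_le_one]
    apply MeasureTheory.integral_integral_swap
    have hco : Continuous (uncurry fun v x => G x v) := hGc.comp continuous_swap
    rw [Measure.prod_restrict]
    have hK : IsCompact (Icc (-1:ℝ) 1 ×ˢ Icc (0:ℝ) 1) := isCompact_Icc.prod isCompact_Icc
    have hIO : IntegrableOn (uncurry fun v x => G x v) (Icc (-1:ℝ) 1 ×ˢ Icc (0:ℝ) 1) volume :=
      hco.continuousOn.integrableOn_compact hK
    exact hIO.mono_set (prod_mono Ioc_subset_Icc_self Ioc_subset_Icc_self)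
  -- continuity of the x-pieces
  have hJ1c : Continuous fun x => ∫ v in (-1:ℝ)..1, (F x v - c x) ^ 2 :=
    intervalIntegral.continuous_parametric_intervalIntegral_of_continuous' (μ := volume)
      (f := fun x v => (F x v - c x) ^ 2) (by exact (hFc.sub (hcc.comp continuous_fst)).pow 2) (-1) 1
  have hJ2c : Continuous fun x => ∫ v in (-1:ℝ)..1, A x * (F x v) ^ 2 :=
    intervalIntegral.continuous_parametric_intervalIntegral_of_continuous' (μ := volume)
      (f := fun x v => A x * (F x v) ^ 2) (by exact (hAc.comp continuous_fst).mul (hFc.pow 2)) (-1) 1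
  have hJ3c : Continuous fun x => ∫ v in (-1:ℝ)..1, Ξ x * F x v :=
    intervalIntegral.continuous_parametric_intervalIntegral_of_continuous' (μ := volume)
      (f := fun x v => Ξ x * F x v) ((hΞc.comp continuous_fst).mul hFc) (-1) 1
  have hJ4c : Continuous fun x => ∫ v in (-1:ℝ)..1, E x v * F x v :=
    intervalIntegral.continuous_parametric_intervalIntegral_of_continuous' (μ := volume)
      (f := fun x v => E x v * F x v) (hEc.mul hFc) (-1) 1
  -- assemble left-hand boundary term
  have l1 : (ε / 2) * (∫ v in (-1:ℝ)..1, v * ((f 1 v) ^ 2 - (f 0 v) ^ 2))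
      = ∫ x in (0:ℝ)..1, ∫ v in (-1:ℝ)..1, G x v := by
    have e1 : (∫ v in (-1:ℝ)..1, v * ((f 1 v) ^ 2 - (f 0 v) ^ 2))
        = ∫ v in (-1:ℝ)..1, v * ((F 1 v) ^ 2 - (F 0 v) ^ 2) := by
      apply intervalIntegral.integral_congr
      intro v hv; rw [huIcc2] at hv
      simp only [hFeq 1 (by norm_num) v hv, hFeq 0 (by norm_num) v hv]
    have e2 : (∫ v in (-1:ℝ)..1, ∫ x in (0:ℝ)..1, G x v)
        = ∫ v in (-1:ℝ)..1, ε * v / 2 * ((F 1 v) ^ 2 - (F 0 v) ^ 2) := by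
      apply intervalIntegral.integral_congr
      intro v hv; rw [huIcc2] at hv; simpa using stepB v hv
    have e3 : (∫ v in (-1:ℝ)..1, ε * v / 2 * ((F 1 v) ^ 2 - (F 0 v) ^ 2))
        = (ε / 2) * ∫ v in (-1:ℝ)..1, v * ((F 1 v) ^ 2 - (F 0 v) ^ 2) := by
      rw [← intervalIntegral.integral_const_mul]
      exact intervalIntegral.integral_congr (fun v _ => by ring)
    rw [e1, ← swap, e2, e3]
  -- split the x-integral using stepC
  have l2 : (∫ x in (0:ℝ)..1, ∫ v in (-1:ℝ)..1, G x v)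
      = -(∫ x in (0:ℝ)..1, S x * ∫ v in (-1:ℝ)..1, (F x v - c x) ^ 2)
        - ε ^ 2 * (∫ x in (0:ℝ)..1, ∫ v in (-1:ℝ)..1, A x * (F x v) ^ 2)
        + ε ^ 2 * (∫ x in (0:ℝ)..1, ∫ v in (-1:ℝ)..1, Ξ x * F x v)
        + ε * (∫ x in (0:ℝ)..1, ∫ v in (-1:ℝ)..1, E x v * F x v) := by
    have h0 : (∫ x in (0:ℝ)..1, ∫ v in (-1:ℝ)..1, G x v)
        = ∫ x in (0:ℝ)..1,
          (-(S x * ∫ v in (-1:ℝ)..1, (F x v - c x) ^ 2)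
            - ε ^ 2 * (∫ v in (-1:ℝ)..1, A x * (F x v) ^ 2)
            + ε ^ 2 * (∫ v in (-1:ℝ)..1, Ξ x * F x v)
            + ε * (∫ v in (-1:ℝ)..1, E x v * F x v)) :=
      intervalIntegral.integral_congr (fun x _ => stepC x)
    have i1 : IntervalIntegrable
        (fun x => -(S x * ∫ v in (-1:ℝ)..1, (F x v - c x) ^ 2)) volume 0 1 :=
      ((hSc.mul hJ1c).neg).intervalIntegrable 0 1
    have i2 : IntervalIntegrable
        (fun x => ε ^ 2 * (∫ v in (-1:ℝ)..1, A x * (F x v) ^ 2)) volume 0 1 :=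
      (continuous_const.mul hJ2c).intervalIntegrable 0 1
    have i3 : IntervalIntegrable
        (fun x => ε ^ 2 * (∫ v in (-1:ℝ)..1, Ξ x * F x v)) volume 0 1 :=
      (continuous_const.mul hJ3c).intervalIntegrable 0 1
    have i4 : IntervalIntegrable
        (fun x => ε * (∫ v in (-1:ℝ)..1, E x v * F x v)) volume 0 1 :=
      (continuous_const.mul hJ4c).intervalIntegrable 0 1
    rw [h0, intervalIntegral.integral_add ((i1.sub i2).add i3) i4,
      intervalIntegral.integral_add (i1.sub i2) i3,
      intervalIntegral.integral_sub i1 i2,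
      intervalIntegral.integral_neg,
      intervalIntegral.integral_const_mul, intervalIntegral.integral_const_mul,
      intervalIntegral.integral_const_mul]
  -- identify each piece with the original data
  have m1 : (∫ x in (0:ℝ)..1, σs x * ∫ v in (-1:ℝ)..1, (f x v - vavg f x) ^ 2)
      = ∫ x in (0:ℝ)..1, S x * ∫ v in (-1:ℝ)..1, (F x v - c x) ^ 2 := by
    apply intervalIntegral.integral_congr
    intro x hx; rw [huIcc1] at hx
    simp only [hS x hx]
    congr 1
    apply intervalIntegral.integral_congr
    intro v hv; rw [huIcc2] at hv
    simp only [hFeq x hx v hv, hveq x hx]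
  have m2 : (∫ x in (0:ℝ)..1, ∫ v in (-1:ℝ)..1, σa x * (f x v) ^ 2)
      = ∫ x in (0:ℝ)..1, ∫ v in (-1:ℝ)..1, A x * (F x v) ^ 2 := by
    apply intervalIntegral.integral_congr
    intro x hx; rw [huIcc1] at hx
    apply intervalIntegral.integral_congr
    intro v hv; rw [huIcc2] at hv
    simp only [hFeq x hx v hv, hA x hx]
  have m3 : (∫ x in (0:ℝ)..1, ∫ v in (-1:ℝ)..1, ξ x * f x v)
      = ∫ x in (0:ℝ)..1, ∫ v in (-1:ℝ)..1, Ξ x * F x v := by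
    apply intervalIntegral.integral_congr
    intro x hx; rw [huIcc1] at hx
    apply intervalIntegral.integral_congr
    intro v hv; rw [huIcc2] at hv
    simp only [hFeq x hx v hv, hΞ x hx]
  have m4 : (∫ x in (0:ℝ)..1, ∫ v in (-1:ℝ)..1, η x v * f x v)
      = ∫ x in (0:ℝ)..1, ∫ v in (-1:ℝ)..1, E x v * F x v := by
    apply intervalIntegral.integral_congr
    intro x hx; rw [huIcc1] at hx
    apply intervalIntegral.integral_congr
    intro v hv; rw [huIcc2] at hv
    simp only [hFeq x hx v hv, hEeq x hx v hv]
  rw [m1, m2, m3, m4, l1, l2]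
  ring
end
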